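/- Let F be a field and consider the F-algebra A(∞) = (⊕_{i≥0} F aᵢ) ⊕ F[[x]] with multiplication aᵢaⱼ = 0, aᵢ·xʲ = a_{i−j} if i ≥ j and 0 otherwise, together with the usual multiplication on F[[x]]. Define t: A(∞) → F by t(a₀) = 1, t(aᵢ) = 0 for i ≥ 1, and t(F[[x]]) = 0. Then: (1) A(∞) is a commutative associative unital F-algebra; (2) the bilinear form (u,v) ↦ t(uv) is non-degenerate on A(∞); (3) the orthogonal complement of F[[x]] with respect to this form equals F[[x]]. -/

import Mathlib

noncomputable section

variable {F : Type*} [Field F]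

/-- The action of `F[[x]]` on the square-zero part `⊕_{i≥0} F aᵢ` of `A(∞)`, determined by
`aᵢ · xʲ = a_{i-j}` when `i ≥ j` and `aᵢ · xʲ = 0` otherwise:
`(a · g)_m = Σ_{i ≥ m} aᵢ g_{i-m}`. -/
def AInfAct (g : PowerSeries F) (a : ℕ →₀ F) : ℕ →₀ F :=
  Finsupp.onFinset (Finset.range (a.support.sup id + 1))
    (fun m => ∑ i ∈ a.support, if m ≤ i then a i * PowerSeries.coeff (i - m) g else 0)
    (fun m h => by
      rw [Finset.mem_range, Nat.lt_succ_iff]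
      by_contra hc
      push_neg at hc
      exact h (Finset.sum_eq_zero fun i hi => by
        have h2 : id i ≤ a.support.sup id := Finset.le_sup hi
        simp only [id] at h2
        rw [if_neg (by omega)]))

/-- Multiplication of `A(∞) = (⊕_{i≥0} F aᵢ) ⊕ F[[x]]`:
`(a, f)·(b, g) = (a·g + b·f, fg)`, where `aᵢ aⱼ = 0` and `aᵢ · xʲ = a_{i-j}`
(`0` when `i < j`). -/
def AInfMul (u v : (ℕ →₀ F) × PowerSeries F) : (ℕ →₀ F) × PowerSeries F :=
  (AInfAct v.2 u.1 + AInfAct u.2 v.1, u.2 * v.2)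

/-- The trace functional of `A(∞)`: `t(a₀) = 1`, `t(aᵢ) = 0` for `i ≥ 1`,
`t(F[[x]]) = 0`. -/
def AInfTrace (u : (ℕ →₀ F) × PowerSeries F) : F := u.1 0

open PowerSeries

lemma act_apply (g : PowerSeries F) (a : ℕ →₀ F) (m : ℕ) :
    AInfAct g a m = ∑ i ∈ a.support, if m ≤ i then a i * PowerSeries.coeff (i - m) g else 0 :=
  rfl

lemma act_apply' (g : PowerSeries F) (a : ℕ →₀ F) (m : ℕ) {s : Finset ℕ}
    (hs : a.support ⊆ s) :
    AInfAct g a m = ∑ i ∈ s, if m ≤ i then a i * PowerSeries.coeff (i - m) g else 0 := by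
  rw [act_apply]
  apply Finset.sum_subset hs
  intro i _ hi
  simp [Finsupp.notMem_support_iff.mp hi]

/-- The pairing `⟨a, h⟩ = Σ aᵢ hᵢ`. -/
def pr (a : ℕ →₀ F) (h : PowerSeries F) : F := a.sum fun i c => c * PowerSeries.coeff i h

lemma pr_eq (a : ℕ →₀ F) (h : PowerSeries F) {s : Finset ℕ} (hs : a.support ⊆ s) :
    pr a h = ∑ i ∈ s, a i * PowerSeries.coeff i h :=
  Finsupp.sum_of_support_subset a hs _ (by simp)

lemma act_eq_pr (g : PowerSeries F) (a : ℕ →₀ F) (m : ℕ) :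
    AInfAct g a m = pr a (g * X ^ m) := by
  rw [act_apply, pr_eq a _ (subset_refl _)]
  refine Finset.sum_congr rfl fun i _ => ?_
  rw [PowerSeries.coeff_mul_X_pow', mul_ite, mul_zero]

lemma pr_zero (h : PowerSeries F) : pr (0 : ℕ →₀ F) h = 0 := by
  simp [pr]

lemma pr_add (a b : ℕ →₀ F) (h : PowerSeries F) : pr (a + b) h = pr a h + pr b h :=
  Finsupp.sum_add_index' (by simp) (by intros; ring)

lemma pr_X_pow (a : ℕ →₀ F) (m : ℕ) : pr a (X ^ m) = a m := by
  rw [pr_eq a _ (subset_refl _)]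
  simp only [PowerSeries.coeff_X_pow, mul_ite, mul_one, mul_zero]
  rw [Finset.sum_ite_eq' a.support m (fun i => a i)]
  by_cases h : m ∈ a.support
  · rw [if_pos h]
  · rw [if_neg h, eq_comm, Finsupp.notMem_support_iff.mp h]

lemma act_zero (g : PowerSeries F) : AInfAct g (0 : ℕ →₀ F) = 0 := by
  ext m; rw [act_eq_pr, pr_zero]; rfl

lemma act_add (g : PowerSeries F) (a b : ℕ →₀ F) :
    AInfAct g (a + b) = AInfAct g a + AInfAct g b := by
  ext m
  rw [Finsupp.add_apply, act_eq_pr, act_eq_pr, act_eq_pr, pr_add]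

lemma act_single (f : PowerSeries F) (n : ℕ) (c : F) (m : ℕ) :
    AInfAct f (Finsupp.single n c) m = if m ≤ n then c * PowerSeries.coeff (n - m) f else 0 := by
  rw [act_apply' f _ m Finsupp.support_single_subset]
  simp [Finsupp.single_apply]

lemma pr_single (n : ℕ) (c : F) (h : PowerSeries F) :
    pr (Finsupp.single n c) h = c * PowerSeries.coeff n h := by
  rw [pr_eq _ _ Finsupp.support_single_subset]
  simp

lemma pr_act (f : PowerSeries F) (a : ℕ →₀ F) (h : PowerSeries F) :
    pr (AInfAct f a) h = pr a (f * h) := by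
  induction a using Finsupp.induction with
  | zero => rw [act_zero, pr_zero, pr_zero]
  | single_add n c b hn hc ih =>
    rw [act_add, pr_add, pr_add, ih]
    congr 1
    -- single case
    have hsupp : (AInfAct f (Finsupp.single n c)).support ⊆ Finset.range (n + 1) := by
      intro m hm
      rw [Finset.mem_range, Nat.lt_succ_iff]
      by_contra hc'
      push_neg at hc'
      exact Finsupp.mem_support_iff.mp hm (by rw [act_single, if_neg (by omega)])
    rw [pr_eq _ _ hsupp, pr_single]
    have : ∀ m ∈ Finset.range (n + 1),
        AInfAct f (Finsupp.single n c) m * PowerSeries.coeff m h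
        = c * (PowerSeries.coeff (n - m) f * PowerSeries.coeff m h) := by
      intro m hm
      rw [Finset.mem_range, Nat.lt_succ_iff] at hm
      rw [act_single, if_pos hm, mul_assoc]
    rw [Finset.sum_congr rfl this, ← Finset.mul_sum]
    congr 1
    rw [PowerSeries.coeff_mul, Finset.Nat.sum_antidiagonal_eq_sum_range_succ
      (fun p q => PowerSeries.coeff p f * PowerSeries.coeff q h)]
    rw [← Finset.sum_range_reflect]
    refine Finset.sum_congr rfl fun m hm => ?_
    rw [Finset.mem_range, Nat.lt_succ_iff] at hm
    simp only [Nat.add_sub_cancel]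
    rw [Nat.sub_sub_self hm]

lemma act_act (f g : PowerSeries F) (a : ℕ →₀ F) :
    AInfAct g (AInfAct f a) = AInfAct (f * g) a := by
  ext m
  rw [act_eq_pr, pr_act, act_eq_pr, mul_assoc]

lemma act_one (a : ℕ →₀ F) : AInfAct 1 a = a := by
  ext m
  rw [act_eq_pr, one_mul, pr_X_pow]

/-- For the trivial trace extension
`A(∞) = (⊕_{i≥0} F aᵢ) ⊕ F[[x]]` of `F[[x]]` with trace functional `t`:
(1) `A(∞)` is a commutative associative unital `F`-algebra with unit `(0, 1)`;
(2) the bilinear form `(u,v) ↦ t(uv)` is non-degenerate;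
(3) the orthogonal complement of `F[[x]] = {(0, f)}` with respect to this form is
`F[[x]]` itself. -/
theorem trivial_trace_extension_properties (F : Type*) [Field F] :
    -- (1) commutativity, associativity, unitality
    (∀ u v : (ℕ →₀ F) × PowerSeries F, AInfMul u v = AInfMul v u) ∧
    (∀ u v w : (ℕ →₀ F) × PowerSeries F,
      AInfMul (AInfMul u v) w = AInfMul u (AInfMul v w)) ∧
    (∀ u : (ℕ →₀ F) × PowerSeries F,
      AInfMul (0, 1) u = u ∧ AInfMul u (0, 1) = u) ∧
    -- (2) non-degeneracy of the trace form
    (∀ u : (ℕ →₀ F) × PowerSeries F,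
      (∀ v : (ℕ →₀ F) × PowerSeries F, AInfTrace (AInfMul u v) = 0) → u = 0) ∧
    -- (3) the orthogonal complement of `F[[x]]` equals `F[[x]]`
    (∀ u : (ℕ →₀ F) × PowerSeries F,
      (∀ f : PowerSeries F, AInfTrace (AInfMul u (0, f)) = 0) ↔
      ∃ f : PowerSeries F, u = (0, f)) := by
  refine ⟨?_, ?_, ?_, ?_, ?_⟩
  · intro u v
    simp only [AInfMul, add_comm, mul_comm]
  · intro u v w
    simp only [AInfMul]
    refine Prod.ext ?_ (mul_assoc _ _ _)
    simp only [act_add, act_act]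
    rw [mul_comm w.2 u.2, mul_comm v.2 u.2]
    abel
  · intro u
    constructor <;>
      simp [AInfMul, act_zero, act_one, Prod.ext_iff]
  · intro u hu
    have h1 : u.1 = 0 := by
      ext m
      have := hu (0, X ^ m)
      simpa [AInfTrace, AInfMul, act_zero, act_eq_pr, pr_X_pow] using this
    have h2 : u.2 = 0 := by
      ext m
      have := hu (Finsupp.single m 1, 1)
      simp only [AInfTrace, AInfMul, h1, act_zero, Finsupp.add_apply, Finsupp.coe_zero,
        Pi.zero_apply, act_single] at this
      simpa using this
    exact Prod.ext h1 h2
  · intro u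
    constructor
    · intro hu
      refine ⟨u.2, Prod.ext ?_ rfl⟩
      ext m
      have := hu (X ^ m)
      simpa [AInfTrace, AInfMul, act_zero, act_eq_pr, pr_X_pow] using this
    · rintro ⟨f, rfl⟩ g
      simp [AInfTrace, AInfMul, act_zero]

end
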